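/- Let θ ∈ ℝ be irrational and let g = [[a,b],[c,d]] ∈ SL₂(ℤ) satisfy (aθ+b)/(cθ+d) = θ, with c > 0 and cθ+d > 0; set ε = (cθ+d)/c. Let E be the space of functions f : ℝ × ℤ/cℤ → ℂ that are Schwartz in the first variable, and define operators on E by (Ûf)(x,[n]) = f(x−1/c, [n−a]) and (V̂f)(x,[n]) = exp(2πix/(cε))·exp(−2πi n̄/c)·f(x,[n]), where n̄ ∈ {0,…,c−1} represents [n]. Then Û∘V̂ = exp(2πiθ)·(V̂∘Û). -/

import Mathlib

open Complex Real

/-- `f : ℝ × ℤ/cℤ → ℂ` is Schwartz in the first variable. -/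
def SchwartzInFirst {c : ℕ} (f : ℝ × ZMod c → ℂ) : Prop :=
  ∀ n : ZMod c, ∃ g : SchwartzMap ℝ ℂ, ∀ x : ℝ, f (x, n) = g x

/-- The operator `Û`: `(Ûf)(x,[n]) = f(x−1/c, [n−a])`. -/
noncomputable def Uhat (a : ℤ) {c : ℕ} (f : ℝ × ZMod c → ℂ) : ℝ × ZMod c → ℂ :=
  fun p => f (p.1 - 1 / (c : ℝ), p.2 - (a : ZMod c))

/-- The operator `V̂`: `(V̂f)(x,[n]) = exp(2πix/(cε))·exp(−2πi n̄/c)·f(x,[n])`. -/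
noncomputable def Vhat (ε : ℝ) {c : ℕ} (f : ℝ × ZMod c → ℂ) : ℝ × ZMod c → ℂ :=
  fun p => Complex.exp (2 * π * I * (p.1 : ℂ) / ((c : ℂ) * (ε : ℂ))) *
    Complex.exp (-2 * π * I * ((p.2.val : ℕ) : ℂ) / (c : ℂ)) * f p

/-- The relation `ÛV̂ = e^{2πiθ}·V̂Û` making the Heisenberg module `E_g` a
left module over the noncommutative torus algebra `𝒜_θ`. -/
theorem Uhat_Vhat_relation
    (θ : ℝ) (hθ : Irrational θ)
    (a b d : ℤ) (c : ℕ) (hc : 0 < c)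
    (hdet : a * d - b * (c : ℤ) = 1)
    (hpos : 0 < (c : ℝ) * θ + (d : ℝ))
    (hfix : ((a : ℝ) * θ + (b : ℝ)) / ((c : ℝ) * θ + (d : ℝ)) = θ)
    (ε : ℝ) (hε : ε = ((c : ℝ) * θ + (d : ℝ)) / (c : ℝ))
    (f : ℝ × ZMod c → ℂ) (hf : SchwartzInFirst f) :
    ∀ p : ℝ × ZMod c,
      Uhat a (Vhat ε f) p =
        Complex.exp (2 * π * I * (θ : ℂ)) * Vhat ε (Uhat a f) p := by
  intro p
  obtain ⟨x, n⟩ := p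
  have hcR : (c : ℝ) ≠ 0 := Nat.cast_ne_zero.mpr hc.ne'
  have hcC : (c : ℂ) ≠ 0 := Nat.cast_ne_zero.mpr hc.ne'
  have hεpos : 0 < ε := by rw [hε]; positivity
  have hεC : (ε : ℂ) ≠ 0 := Complex.ofReal_ne_zero.mpr hεpos.ne'
  -- key real identity: a*c*ε = c^2*θ*ε + 1
  have h1 : (a : ℝ) * θ + (b : ℝ) = θ * ((c : ℝ) * θ + (d : ℝ)) := by
    rw [div_eq_iff hpos.ne'] at hfix; linarith [hfix]
  have hcε : (c : ℝ) * ε = (c : ℝ) * θ + (d : ℝ) := by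
    rw [hε]; field_simp
  have hdetR : (a : ℝ) * d - b * c = 1 := by exact_mod_cast hdet
  have hkey : (a : ℝ) * c * ε = (c : ℝ)^2 * θ * ε + 1 := by
    have : (a : ℝ) * ((c:ℝ) * ε) = (c:ℝ) * θ * ((c:ℝ) * ε) + 1 := by
      rw [hcε]; nlinarith [h1, hdetR]
    linarith [this]
  -- integer relation for vals
  set v : ℕ := n.val with hv
  set v' : ℕ := (n - (a : ZMod c)).val with hv2
  haveI : NeZero c := ⟨hc.ne'⟩
  obtain ⟨k, hk⟩ : ∃ k : ℤ, (v' : ℤ) = (v : ℤ) - a + (c : ℤ) * k := by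
    have : (((v' : ℤ) - ((v : ℤ) - a) : ℤ) : ZMod c) = 0 := by
      push_cast
      simp [hv, hv2, ZMod.natCast_val, ZMod.intCast_cast]
    obtain ⟨k, hk⟩ := (ZMod.intCast_zmod_eq_zero_iff_dvd _ _).mp this
    exact ⟨k, by omega⟩
  -- reduce to scalar identity
  simp only [Uhat, Vhat]
  have hscalar :
      Complex.exp (2 * π * I * ((x - 1 / (c:ℝ) : ℝ) : ℂ) / ((c : ℂ) * (ε : ℂ))) *
        Complex.exp (-2 * π * I * ((v' : ℕ) : ℂ) / (c : ℂ)) =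
      Complex.exp (2 * π * I * (θ : ℂ)) *
        (Complex.exp (2 * π * I * (x : ℂ) / ((c : ℂ) * (ε : ℂ))) *
          Complex.exp (-2 * π * I * ((v : ℕ) : ℂ) / (c : ℂ))) := by
    rw [← Complex.exp_add, ← Complex.exp_add, ← Complex.exp_add]
    rw [Complex.exp_eq_exp_iff_exists_int]
    refine ⟨-k, ?_⟩
    have hkC : ((v' : ℕ) : ℂ) = ((v : ℕ) : ℂ) - a + (c : ℂ) * k := by
      exact_mod_cast congrArg (Int.cast : ℤ → ℂ) hk
    have hkeyC : (a : ℂ) * (c : ℂ) * (ε : ℂ) = (c : ℂ)^2 * (θ : ℂ) * (ε : ℂ) + 1 := by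
      exact_mod_cast congrArg (Complex.ofReal : ℝ → ℂ) hkey
    rw [hkC]
    push_cast
    field_simp
    linear_combination hkeyC
  rw [hscalar]
  ring
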